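/- Let p be a prime with p ≥ 5, and let S be the additive submonoid of ℕ generated by all primes q ≥ p. Then 3p − 6 does not belong to S. Consequently, the Frobenius number of S is at least 3p − 6. -/

import Mathlib

open Real

/-- The additive submonoid of ℕ generated by all primes `q ≥ p`. -/
def Sgen (p : ℕ) : AddSubmonoid ℕ := AddSubmonoid.closure {q : ℕ | q.Prime ∧ p ≤ q}

/-- `a` is an atom of `Sgen p`: nonzero, in `Sgen p`, and not a sum of two nonzero elements. -/
def IsAtomOf (p a : ℕ) : Prop :=
  a ∈ Sgen p ∧ a ≠ 0 ∧
    ¬ ∃ b c : ℕ, b ∈ Sgen p ∧ c ∈ Sgen p ∧ b ≠ 0 ∧ c ≠ 0 ∧ a = b + c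
theorem stmt2 (p : ℕ) (hp : p.Prime) (hp5 : 5 ≤ p) :
    3 * p - 6 ∉ Sgen p ∧
      ∀ F : ℕ, IsGreatest {m : ℕ | m ∉ Sgen p} F → 3 * p - 6 ≤ F := by
  have key : ∀ n ∈ Sgen p,
      n = 0 ∨ (n.Prime ∧ p ≤ n) ∨ (n % 2 = 0 ∧ 2 * p ≤ n) ∨ 3 * p ≤ n := by
    intro n hn
    induction hn using AddSubmonoid.closure_induction with
    | mem x hx => exact Or.inr (Or.inl hx)
    | zero => exact Or.inl rfl
    | add a b _ _ iha ihb =>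
      have oddfact : ∀ m : ℕ, m.Prime → p ≤ m → m % 2 = 1 := by
        intro m hm hpm
        exact Nat.odd_iff.mp (hm.odd_of_ne_two (by omega))
      rcases iha with rfl | ⟨hpa, hap⟩ | ⟨hea, h2a⟩ | h3a
      · simpa using ihb
      all_goals rcases ihb with rfl | ⟨hpb, hbp⟩ | ⟨heb, h2b⟩ | h3b
      · simpa using Or.inr (Or.inl ⟨hpa, hap⟩)
      · have h1 := oddfact a hpa hap
        have h2 := oddfact b hpb hbp
        exact Or.inr (Or.inr (by omega))
      · have h1 := oddfact a hpa hap
        exact Or.inr (Or.inr (by omega))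
      · have h1 := oddfact a hpa hap
        exact Or.inr (Or.inr (by omega))
      · simpa using Or.inr (Or.inr (Or.inl ⟨hea, h2a⟩))
      · have h2 := oddfact b hpb hbp
        exact Or.inr (Or.inr (by omega))
      · exact Or.inr (Or.inr (by omega))
      · exact Or.inr (Or.inr (by omega))
      · simpa using Or.inr (Or.inr (Or.inr h3a))
      · have h2 := oddfact b hpb hbp
        exact Or.inr (Or.inr (by omega))
      · exact Or.inr (Or.inr (by omega))
      · exact Or.inr (Or.inr (by omega))
  have hpodd : p % 2 = 1 := by
    exact Nat.odd_iff.mp (hp.odd_of_ne_two (by omega))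
  have hnot : 3 * p - 6 ∉ Sgen p := by
    intro hmem
    rcases key _ hmem with h | ⟨hpr, _⟩ | ⟨he, _⟩ | h3
    · omega
    · have hdvd : 3 ∣ 3 * p - 6 := ⟨p - 2, by omega⟩
      rcases (hpr.eq_one_or_self_of_dvd 3 hdvd) with h | h <;> omega
    · omega
    · omega
  exact ⟨hnot, fun F hF => hF.2 hnot⟩
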